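/- For n ∈ ℕ let b_n denote the number of hyperbinary representations of n, i.e., the number of ways to write n as a sum ∑_{k≥0} a_k 2^k where each a_k ∈ {0,1,2} and all but finitely many a_k are zero (with b_0 = 1). Then for all k ≥ 0, b_{2k+1} = b_k and b_{2k+2} = b_k + b_{k+1}. -/

import Mathlib

/-- `hyperbinary n` is the number of hyperbinary representations of `n`, i.e. the number of
finitely supported functions `a : ℕ → ℕ` with all values at most `2` and `∑_k a_k 2^k = n`. -/
noncomputable def hyperbinary (n : ℕ) : ℕ :=
  Nat.card {a : ℕ →₀ ℕ // (∀ k, a k ≤ 2) ∧ (a.sum fun k c => c * 2 ^ k) = n}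

namespace HyperAux

/-- Shift a finsupp down by one (drop the value at 0). -/
noncomputable def tailF (a : ℕ →₀ ℕ) : ℕ →₀ ℕ :=
  Finsupp.comapDomain Nat.succ a (Nat.succ_injective.injOn)

/-- Prepend a value at 0. -/
noncomputable def consF (c : ℕ) (b : ℕ →₀ ℕ) : ℕ →₀ ℕ :=
  Finsupp.single 0 c + Finsupp.embDomain ⟨Nat.succ, Nat.succ_injective⟩ b

@[simp] lemma tailF_apply (a : ℕ →₀ ℕ) (k : ℕ) : tailF a k = a (k + 1) := rfl

@[simp] lemma consF_apply_zero (c : ℕ) (b : ℕ →₀ ℕ) : consF c b 0 = c := by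
  have h0 : (0 : ℕ) ∉ Set.range (⟨Nat.succ, Nat.succ_injective⟩ : ℕ ↪ ℕ) := by
    rintro ⟨x, hx⟩; exact Nat.succ_ne_zero x hx
  simp [consF, Finsupp.embDomain_notin_range _ _ _ h0]

@[simp] lemma consF_apply_succ (c : ℕ) (b : ℕ →₀ ℕ) (k : ℕ) : consF c b (k + 1) = b k := by
  have : Finsupp.embDomain (⟨Nat.succ, Nat.succ_injective⟩ : ℕ ↪ ℕ) b (k + 1) = b k :=
    Finsupp.embDomain_apply_self _ _ _
  simp [consF, this, Finsupp.single_apply]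

@[simp] lemma tailF_consF (c : ℕ) (b : ℕ →₀ ℕ) : tailF (consF c b) = b := by
  ext k; simp

lemma consF_tailF (a : ℕ →₀ ℕ) : consF (a 0) (tailF a) = a := by
  ext k; cases k with
  | zero => simp
  | succ k => simp

lemma sum_consF (c : ℕ) (b : ℕ →₀ ℕ) :
    ((consF c b).sum fun k c => c * 2 ^ k) = c + 2 * b.sum fun k c => c * 2 ^ k := by
  rw [consF, Finsupp.sum_add_index' (by simp) (by intros; ring)]
  rw [Finsupp.sum_single_index (by simp), Finsupp.sum_embDomain]
  simp only [Function.Embedding.coeFn_mk, Finsupp.sum, Finset.mul_sum]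
  congr 1
  · simp
  · exact Finset.sum_congr rfl fun k _ => by rw [pow_succ]; ring

lemma sum_eq (a : ℕ →₀ ℕ) :
    (a.sum fun k c => c * 2 ^ k) = a 0 + 2 * (tailF a).sum fun k c => c * 2 ^ k := by
  conv_lhs => rw [← consF_tailF a]
  rw [sum_consF]

lemma le_bound {n : ℕ} (a : ℕ →₀ ℕ) (h2 : ∀ k, a k ≤ 2)
    (hs : (a.sum fun k c => c * 2 ^ k) = n) :
    a ≤ Finsupp.onFinset (Finset.range (n + 1)) (fun k => if k ≤ n then 2 else 0)
      (fun k hk => by simp at hk; simp [Finset.mem_range]; omega) := by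
  rw [Finsupp.le_def]
  intro k
  simp only [Finsupp.onFinset_apply]
  by_cases hk : k ≤ n
  · simp [hk, h2 k]
  · simp only [hk, if_false]
    by_contra h
    have hk' : k ∈ a.support := Finsupp.mem_support_iff.2 (by omega)
    have : a k * 2 ^ k ≤ n := by
      rw [← hs]
      exact Finset.single_le_sum (f := fun k => a k * 2 ^ k) (fun i _ => Nat.zero_le _) hk'
    have h2k : 2 ^ k ≤ n := le_trans (Nat.le_mul_of_pos_left (2 ^ k) (by have := Finsupp.mem_support_iff.1 hk'; omega)) this
    exact hk (le_trans (Nat.le_of_lt (Nat.lt_two_pow_self (n := k))) h2k)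

instance finRep (n : ℕ) :
    Finite {a : ℕ →₀ ℕ // (∀ k, a k ≤ 2) ∧ (a.sum fun k c => c * 2 ^ k) = n} := by
  have : {a : ℕ →₀ ℕ | (∀ k, a k ≤ 2) ∧ (a.sum fun k c => c * 2 ^ k) = n}.Finite := by
    apply Set.Finite.subset (Set.finite_Iic
      (Finsupp.onFinset (Finset.range (n + 1)) (fun k => if k ≤ n then 2 else 0)
        (fun k hk => by simp at hk; simp [Finset.mem_range]; omega)))
    rintro a ⟨h2, hs⟩
    exact le_bound a h2 hs
  exact this

/-- Odd case equivalence. -/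
noncomputable def oddEquiv (k : ℕ) :
    {a : ℕ →₀ ℕ // (∀ j, a j ≤ 2) ∧ (a.sum fun j c => c * 2 ^ j) = 2 * k + 1} ≃
    {a : ℕ →₀ ℕ // (∀ j, a j ≤ 2) ∧ (a.sum fun j c => c * 2 ^ j) = k} where
  toFun := fun ⟨a, h2, hs⟩ => ⟨tailF a, fun j => h2 (j + 1), by
    rw [sum_eq a] at hs
    have := h2 0
    omega⟩
  invFun := fun ⟨b, h2, hs⟩ => ⟨consF 1 b, fun j => by cases j <;> simp [h2], by
    rw [sum_consF]; omega⟩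
  left_inv := by
    rintro ⟨a, h2, hs⟩
    have ha0 : a 0 = 1 := by
      rw [sum_eq a] at hs
      have := h2 0
      omega
    apply Subtype.ext
    simp only
    rw [← ha0, consF_tailF]
  right_inv := by
    rintro ⟨b, h2, hs⟩
    apply Subtype.ext
    simp

/-- Even case equivalence. -/
noncomputable def evenEquiv (k : ℕ) :
    {a : ℕ →₀ ℕ // (∀ j, a j ≤ 2) ∧ (a.sum fun j c => c * 2 ^ j) = 2 * k + 2} ≃
    ({a : ℕ →₀ ℕ // (∀ j, a j ≤ 2) ∧ (a.sum fun j c => c * 2 ^ j) = k} ⊕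
     {a : ℕ →₀ ℕ // (∀ j, a j ≤ 2) ∧ (a.sum fun j c => c * 2 ^ j) = k + 1}) where
  toFun := fun ⟨a, h2, hs⟩ =>
    if h : a 0 = 2 then
      Sum.inl ⟨tailF a, fun j => h2 (j + 1), by rw [sum_eq a] at hs; omega⟩
    else
      Sum.inr ⟨tailF a, fun j => h2 (j + 1), by
        have ha0 : a 0 = 0 := by
          rw [sum_eq a] at hs
          have := h2 0
          omega
        rw [sum_eq a] at hs; omega⟩
  invFun := fun x => match x with
    | Sum.inl ⟨b, h2, hs⟩ => ⟨consF 2 b, fun j => by cases j <;> simp [h2], by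
        rw [sum_consF]; omega⟩
    | Sum.inr ⟨b, h2, hs⟩ => ⟨consF 0 b, fun j => by cases j <;> simp [h2], by
        rw [sum_consF]; omega⟩
  left_inv := by
    rintro ⟨a, h2, hs⟩
    by_cases h : a 0 = 2
    · simp only [h, dif_pos]
      apply Subtype.ext
      simp only
      rw [← h, consF_tailF]
    · have ha0 : a 0 = 0 := by
        rw [sum_eq a] at hs
        have := h2 0
        omega
      simp only [h, dif_neg, not_false_iff]
      apply Subtype.ext
      simp only
      rw [← ha0, consF_tailF]
  right_inv := by
    rintro (⟨b, h2, hs⟩ | ⟨b, h2, hs⟩)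
    · simp
    · simp

end HyperAux

/-- For the hyperbinary counting function: `b_{2k+1} = b_k` and `b_{2k+2} = b_k + b_{k+1}`. -/
theorem stmt_16 : ∀ k : ℕ,
    hyperbinary (2 * k + 1) = hyperbinary k ∧
    hyperbinary (2 * k + 2) = hyperbinary k + hyperbinary (k + 1) := by
  intro k
  constructor
  · exact Nat.card_congr (HyperAux.oddEquiv k)
  · rw [hyperbinary, Nat.card_congr (HyperAux.evenEquiv k), Nat.card_sum]
    rfl
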